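/- If f, g, h are functions on a finite probabilistic team with =(f,g), g ≈* h, and the images satisfy |h(X)| ≥ |f(X)|, then |f(X)| = |g(X)| = |h(X)| and =(g,f) holds. -/

import Mathlib

/-- The multiset of marginal probabilities of `f` over its image. -/
noncomputable def margMultiset {X A : Type*} [Fintype X] [DecidableEq A]
    (P : X → ℝ) (f : X → A) : Multiset ℝ :=
  (Finset.univ.image f).val.map
    (fun a => ∑ s ∈ Finset.univ.filter (fun s => f s = a), P s)

theorem stmt_15 {X A B C : Type*} [Fintype X] [Nonempty X]
    [DecidableEq A] [DecidableEq B] [DecidableEq C]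
    (f : X → A) (g : X → B) (h : X → C)
    (P : X → ℝ) (hP : ∀ s, 0 < P s) (hsum : ∑ s, P s = 1)
    (hfd : ∀ s s', f s = f s' → g s = g s')
    (hmde : margMultiset P g = margMultiset P h)
    (hcard : (Finset.univ.image f).card ≤ (Finset.univ.image h).card) :
    (Finset.univ.image f).card = (Finset.univ.image g).card ∧
    (Finset.univ.image g).card = (Finset.univ.image h).card ∧
    (∀ s s', g s = g s' → f s = f s') := by
  classical
  -- |g| = |h| from the multiset equality
  have hgh : (Finset.univ.image g).card = (Finset.univ.image h).card := by
    have := congrArg Multiset.card hmde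
    simpa only [margMultiset, Multiset.card_map, Finset.card_val] using this
  -- φ transporting values of f to values of g
  set φ : A → B := fun a =>
    g (if hx : ∃ s, f s = a then hx.choose else Classical.arbitrary X) with hφ
  have hφf : ∀ s, φ (f s) = g s := by
    intro s
    have hx : ∃ s', f s' = f s := ⟨s, rfl⟩
    simp only [hφ, dif_pos hx]
    exact hfd _ _ hx.choose_spec
  have himg : (Finset.univ.image f).image φ = Finset.univ.image g := by
    rw [Finset.image_image]
    exact Finset.image_congr (fun s _ => hφf s)
  have hgf : (Finset.univ.image g).card ≤ (Finset.univ.image f).card := by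
    rw [← himg]; exact Finset.card_image_le
  have h1 : (Finset.univ.image f).card = (Finset.univ.image g).card :=
    le_antisymm (hcard.trans hgh.ge) hgf
  refine ⟨h1, hgh, ?_⟩
  have hinj : Set.InjOn φ (Finset.univ.image f) := by
    apply Finset.injOn_of_card_image_eq
    rw [himg, h1]
  intro s s' hgs
  apply hinj (Finset.mem_image_of_mem f (Finset.mem_univ s))
    (Finset.mem_image_of_mem f (Finset.mem_univ s'))
  rw [hφf, hφf]; exact hgs
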